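/- arXiv:1003.1287 — 2 statements merged into one kernel-verified Lean document; each statement's English description precedes it below -/
import Mathlib

section
/- Let p be a prime. The function field Cohen–Lenstra probability weights P(r) = p^{-r²} · η_∞(p) · ∏_{k=1}^{r} (1 - p^{-k})^{-2}, where η_∞(p) = ∏_{k≥1}(1 - p^{-k}), satisfy ∑_{r=0}^{∞} P(r) = 1. -/
open Finset Filter Real

/-- Finite q-Pochhammer `∏_{i=1}^n (1 - q^i)`. -/
noncomputable def clPoch (q : ℝ) (n : ℕ) : ℝ := ∏ i ∈ Finset.range n, (1 - q ^ (i + 1))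

/-- Gaussian binomial coefficient as a real number. -/
noncomputable def clGB (q : ℝ) (n k : ℕ) : ℝ :=
  if k ≤ n then clPoch q n / (clPoch q k * clPoch q (n - k)) else 0

section basic
variable {q : ℝ} (hq0 : 0 < q) (hq1 : q < 1)

lemma clPoch_zero : clPoch q 0 = 1 := by simp [clPoch]

lemma clPoch_succ (n : ℕ) : clPoch q (n + 1) = clPoch q n * (1 - q ^ (n + 1)) :=
  Finset.prod_range_succ _ n

include hq0 hq1 in
lemma clPoch_pos (n : ℕ) : 0 < clPoch q n := by
  apply Finset.prod_pos
  intro i _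
  have : q ^ (i + 1) < 1 := pow_lt_one₀ hq0.le hq1 (Nat.succ_ne_zero i)
  linarith

include hq0 hq1 in
lemma clPoch_ne (n : ℕ) : clPoch q n ≠ 0 := (clPoch_pos hq0 hq1 n).ne'

include hq0 hq1 in
lemma clPoch_le_one (n : ℕ) : clPoch q n ≤ 1 := by
  apply Finset.prod_le_one
  · intro i _
    nlinarith [pow_lt_one₀ hq0.le hq1 (n := i + 1) (by omega), pow_pos hq0 (i + 1)]
  · intro i _
    nlinarith [pow_lt_one₀ hq0.le hq1 (n := i + 1) (by omega), pow_pos hq0 (i + 1)]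

include hq0 hq1 in
lemma clPoch_anti : Antitone (clPoch q) := by
  apply antitone_nat_of_succ_le
  intro n
  rw [clPoch_succ]
  nlinarith [clPoch_pos hq0 hq1 n, pow_pos hq0 (n + 1)]

include hq0 hq1 in
lemma clGB_zero_right (n : ℕ) : clGB q n 0 = 1 := by
  simp [clGB, clPoch_zero, clPoch_ne hq0 hq1 n]

lemma clGB_eq_zero {n k : ℕ} (h : n < k) : clGB q n k = 0 := by
  simp [clGB, Nat.not_le.mpr h]

include hq0 hq1 in
lemma clGB_self (n : ℕ) : clGB q n n = 1 := by
  simp [clGB, clPoch_zero, clPoch_ne hq0 hq1 n]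

include hq0 hq1 in
lemma clGB_zero_left (k : ℕ) : clGB q 0 k = if k = 0 then 1 else 0 := by
  rcases Nat.eq_zero_or_pos k with rfl | hk
  · simp [clGB_self hq0 hq1]
  · rw [clGB_eq_zero hk, if_neg hk.ne']

lemma clGB_symm {n k : ℕ} (h : k ≤ n) : clGB q n (n - k) = clGB q n k := by
  rw [clGB, clGB, if_pos h, if_pos (Nat.sub_le n k), show n - (n - k) = k by omega,
    mul_comm]

include hq0 hq1 in
lemma clGB_pascal (n k : ℕ) :
    clGB q (n + 1) (k + 1) = clGB q n (k + 1) + q ^ (n - k) * clGB q n k := by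
  rcases lt_trichotomy k n with h | rfl | h
  · have hk1 : k + 1 ≤ n := h
    obtain ⟨d, rfl⟩ : ∃ d, n = k + 1 + d := ⟨n - (k + 1), by omega⟩
    rw [clGB, clGB, clGB, if_pos (by omega), if_pos (by omega), if_pos (by omega),
      show k + 1 + d + 1 - (k + 1) = d + 1 by omega,
      show k + 1 + d - (k + 1) = d by omega,
      show k + 1 + d - k = d + 1 by omega,
      show clPoch q (k + 1 + d + 1) = clPoch q (k + 1 + d) * (1 - q ^ (k + 1 + d + 1)) from
        clPoch_succ _, clPoch_succ d, clPoch_succ k,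
      show k + 1 + d + 1 = (d + 1) + (k + 1) by ring, pow_add]
    have h1 := clPoch_ne hq0 hq1 (k + 1 + d)
    have h2 := clPoch_ne hq0 hq1 d
    have h3 := clPoch_ne hq0 hq1 k
    have h4 : (1 : ℝ) - q ^ (d + 1) ≠ 0 := by
      have : q ^ (d + 1) < 1 := pow_lt_one₀ hq0.le hq1 (Nat.succ_ne_zero d)
      intro hc; linarith [hc]
    have h5 : (1 : ℝ) - q ^ (k + 1) ≠ 0 := by
      have : q ^ (k + 1) < 1 := pow_lt_one₀ hq0.le hq1 (Nat.succ_ne_zero k)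
      intro hc; linarith [hc]
    field_simp
    ring
  · rw [clGB_self hq0 hq1, clGB_eq_zero (Nat.lt_succ_self k), Nat.sub_self, pow_zero,
      clGB_self hq0 hq1]
    ring
  · rw [clGB_eq_zero (by omega), clGB_eq_zero (by omega), clGB_eq_zero h]
    ring

end basic

section vdm
variable {q : ℝ} (hq0 : 0 < q) (hq1 : q < 1)

include hq0 hq1 in
lemma clGB_vandermonde (m n k : ℕ) :
    clGB q (m + n) k =
      ∑ j ∈ Finset.range (k + 1), clGB q m j * clGB q n (k - j) * q ^ ((m - j) * (k - j)) := by
  induction n generalizing k with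
  | zero =>
    rw [Finset.sum_eq_single_of_mem k (Finset.self_mem_range_succ k)]
    · simp [clGB_self hq0 hq1, Nat.add_zero]
    · intro j hj hjk
      have hj' : j < k := by
        have := Finset.mem_range.mp hj; omega
      rw [clGB_zero_left hq0 hq1, if_neg (by omega)]
      ring
  | succ n ih =>
    cases k with
    | zero =>
      simp [clGB_zero_right hq0 hq1]
    | succ k =>
      rw [show m + (n + 1) = (m + n) + 1 by ring, clGB_pascal hq0 hq1, ih, ih k,
        Finset.sum_range_succ, Finset.sum_range_succ
          (fun j => clGB q m j * clGB q (n + 1) (k + 1 - j) * q ^ ((m - j) * (k + 1 - j)))]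
      simp only [Nat.sub_self, mul_zero, pow_zero, mul_one, Nat.add_sub_cancel_left,
        Nat.sub_self]
      rw [clGB_zero_right hq0 hq1, clGB_zero_right hq0 hq1, mul_one,
        Finset.mul_sum, add_right_comm]
      congr 1
      rw [← Finset.sum_add_distrib]
      apply Finset.sum_congr rfl
      intro j hj
      have hjk : j ≤ k := Nat.lt_succ_iff.mp (Finset.mem_range.mp hj)
      rw [show k + 1 - j = (k - j) + 1 by omega, clGB_pascal hq0 hq1 n (k - j)]
      by_cases hjm : j ≤ m
      · by_cases hkn : k - j ≤ n
        · have hqq : q ^ (m + n - k) * q ^ ((m - j) * (k - j)) =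
              q ^ (n - (k - j)) * q ^ ((m - j) * ((k - j) + 1)) := by
            rw [← pow_add, ← pow_add]
            congr 1
            have h1 : (m - j) * ((k - j) + 1) = (m - j) * (k - j) + (m - j) := by ring
            rw [h1]
            generalize (m - j) * (k - j) = t
            omega
          linear_combination (clGB q m j * clGB q n (k - j)) * hqq
        · rw [clGB_eq_zero (show n < k - j by omega),
            clGB_eq_zero (show n < (k - j) + 1 by omega)]
          ring
      · rw [clGB_eq_zero (show m < j by omega)]
        ring

include hq0 hq1 in
lemma clGB_central (n : ℕ) :
    clGB q (n + n) n = ∑ k ∈ Finset.range (n + 1), (clGB q n k) ^ 2 * q ^ (k ^ 2) := by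
  rw [clGB_vandermonde hq0 hq1 n n n]
  have h1 : ∀ j ∈ Finset.range (n + 1),
      clGB q n j * clGB q n (n - j) * q ^ ((n - j) * (n - j)) =
        (fun i => (clGB q n i) ^ 2 * q ^ (i ^ 2)) (n - j) := by
    intro j hj
    have hjn : j ≤ n := Nat.lt_succ_iff.mp (Finset.mem_range.mp hj)
    simp only []
    rw [show (n - j) * (n - j) = (n - j) ^ 2 from (sq (n - j)).symm, clGB_symm hjn]
    ring
  rw [Finset.sum_congr rfl h1]
  have := Finset.sum_range_reflect (fun i => (clGB q n i) ^ 2 * q ^ (i ^ 2)) (n + 1)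
  simp only [Nat.add_sub_cancel] at this
  exact this

end vdm

section analytic
variable {q : ℝ} (hq0 : 0 < q) (hq2 : q ≤ 1 / 2)

include hq0 hq2

lemma cl_hq1 : q < 1 := lt_of_le_of_lt hq2 (by norm_num)

lemma cl_log_summable : Summable (fun k : ℕ => Real.log (1 - q ^ (k + 1))) := by
  have hq1 : q < 1 := cl_hq1 hq0 hq2
  have hsum : Summable (fun k : ℕ => 2 * q * q ^ k) :=
    (summable_geometric_of_lt_one hq0.le hq1).mul_left (2 * q)
  apply Summable.of_norm_bounded hsum
  intro k
  set x : ℝ := q ^ (k + 1) with hx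
  have hx0 : 0 < x := pow_pos hq0 (k + 1)
  have hxh : x ≤ 1 / 2 := by
    calc x ≤ q ^ 1 := pow_le_pow_of_le_one hq0.le hq1.le (by omega)
    _ = q := pow_one q
    _ ≤ 1 / 2 := hq2
  have h1x : 0 < 1 - x := by linarith
  have hlogle : Real.log (1 - x) ≤ 0 := Real.log_nonpos (by linarith) (by linarith)
  have hineq : -Real.log (1 - x) ≤ 2 * x := by
    have h := Real.log_le_sub_one_of_pos (x := (1 - x)⁻¹) (by positivity)
    rw [Real.log_inv] at h
    have h2 : (1 - x)⁻¹ - 1 ≤ 2 * x := by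
      rw [inv_eq_one_div, div_sub' h1x.ne', div_le_iff₀ h1x]
      nlinarith
    linarith
  have : ‖Real.log (1 - x)‖ = -Real.log (1 - x) := by
    rw [Real.norm_eq_abs, abs_of_nonpos hlogle]
  rw [this]
  calc -Real.log (1 - x) ≤ 2 * x := hineq
  _ = 2 * q * q ^ k := by rw [hx, pow_succ]; ring

lemma cl_hasProd :
    HasProd (fun k : ℕ => 1 - q ^ (k + 1))
      (Real.exp (∑' k : ℕ, Real.log (1 - q ^ (k + 1)))) := by
  have hq1 : q < 1 := cl_hq1 hq0 hq2
  have h := (cl_log_summable hq0 hq2).hasSum.rexp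
  convert h using 2 with k
  simp only [Function.comp]
  rw [Real.exp_log]
  nlinarith [pow_lt_one₀ hq0.le hq1 (n := k + 1) (by omega), pow_pos hq0 (k + 1)]

lemma cl_key :
    (∑' k : ℕ, ((clPoch q k)⁻¹) ^ 2 * q ^ (k ^ 2)) =
      (∏' k : ℕ, (1 - q ^ (k + 1)))⁻¹ := by
  have hq1 : q < 1 := cl_hq1 hq0 hq2
  set P : ℝ := Real.exp (∑' k : ℕ, Real.log (1 - q ^ (k + 1))) with hPdef
  have hProd := cl_hasProd hq0 hq2
  have hP0 : 0 < P := Real.exp_pos _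
  have hPeq : (∏' k : ℕ, (1 - q ^ (k + 1))) = P := hProd.tprod_eq
  have hPoch_tendsto : Tendsto (clPoch q) atTop (nhds P) := hProd.tendsto_prod_nat
  have hPoch_ge : ∀ n, P ≤ clPoch q n := by
    intro n
    apply le_of_tendsto hPoch_tendsto
    filter_upwards [eventually_ge_atTop n] with m hm
    exact clPoch_anti hq0 hq1 hm
  -- each Gaussian binomial tends to 1/poch k
  have hgb_tendsto : ∀ k : ℕ,
      Tendsto (fun n => clGB q n k) atTop (nhds (clPoch q k)⁻¹) := by
    intro k
    have hpk := clPoch_pos hq0 hq1 k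
    have hden : clPoch q k * P ≠ 0 := by positivity
    have h1 : Tendsto (fun n => clPoch q n / (clPoch q k * clPoch q (n - k))) atTop
        (nhds (P / (clPoch q k * P))) :=
      hPoch_tendsto.div
        ((hPoch_tendsto.comp (tendsto_sub_atTop_nat k)).const_mul (clPoch q k)) hden
    have h2 : P / (clPoch q k * P) = (clPoch q k)⁻¹ := by
      rw [mul_comm, div_mul_eq_div_div, div_self hP0.ne', one_div]
    rw [h2] at h1
    apply h1.congr'
    filter_upwards [eventually_ge_atTop k] with n hn
    rw [clGB, if_pos hn]
  -- uniform bound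
  have hgb_le : ∀ n k : ℕ, clGB q n k ≤ (P⁻¹) ^ 2 := by
    intro n k
    rw [clGB]
    split_ifs with h
    · have hd : 0 < clPoch q k * clPoch q (n - k) := by
        have := clPoch_pos hq0 hq1 k
        have := clPoch_pos hq0 hq1 (n - k)
        positivity
      calc clPoch q n / (clPoch q k * clPoch q (n - k)) ≤ 1 / (P * P) := by
            apply div_le_div₀ (by positivity) (clPoch_le_one hq0 hq1 n) (by positivity)
            exact mul_le_mul (hPoch_ge k) (hPoch_ge (n - k)) hP0.le
              (clPoch_pos hq0 hq1 k).le
      _ = (P⁻¹) ^ 2 := by rw [sq]; field_simp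
    · positivity
  -- dominated convergence
  set F : ℕ → ℕ → ℝ := fun n k => (clGB q n k) ^ 2 * q ^ (k ^ 2) with hF
  set g : ℕ → ℝ := fun k => ((clPoch q k)⁻¹) ^ 2 * q ^ (k ^ 2) with hg
  have hbound_summable : Summable (fun k : ℕ => ((P⁻¹) ^ 2) ^ 2 * q ^ k) :=
    (summable_geometric_of_lt_one hq0.le hq1).mul_left _
  have htendsto : Tendsto (fun n => ∑' k, F n k) atTop (nhds (∑' k, g k)) := by
    apply tendsto_tsum_of_dominated_convergence hbound_summable
    · intro k
      exact ((hgb_tendsto k).pow 2).mul_const _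
    · filter_upwards with n k
      have h1 : ‖F n k‖ = (clGB q n k) ^ 2 * q ^ (k ^ 2) := by
        rw [Real.norm_eq_abs, abs_of_nonneg (by positivity)]
      rw [h1]
      have hgbnn : 0 ≤ clGB q n k := by
        rw [clGB]; split_ifs with h
        · have := clPoch_pos hq0 hq1 n
          have := clPoch_pos hq0 hq1 k
          have := clPoch_pos hq0 hq1 (n - k)
          positivity
        · exact le_refl 0
      have h3 : clGB q n k ^ 2 ≤ (P⁻¹ ^ 2) ^ 2 :=
        pow_le_pow_left₀ hgbnn (hgb_le n k) 2
      have h4 : q ^ (k ^ 2) ≤ q ^ k :=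
        pow_le_pow_of_le_one hq0.le hq1.le (Nat.le_self_pow (by norm_num) k)
      exact mul_le_mul h3 h4 (by positivity) (by positivity)
  have hsum_eq : ∀ n, ∑' k, F n k = clGB q (n + n) n := by
    intro n
    rw [tsum_eq_sum (s := Finset.range (n + 1))
      (fun k hk => by
        have hk' : n < k := by
          simp only [Finset.mem_range] at hk
          omega
        simp [hF, clGB_eq_zero hk'])]
    exact (clGB_central hq0 hq1 n).symm
  have hG : Tendsto (fun n => clGB q (n + n) n) atTop (nhds P⁻¹) := by
    have hdbl : Tendsto (fun n : ℕ => n + n) atTop atTop :=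
      tendsto_atTop_mono (fun n => Nat.le_add_left n n) tendsto_id
    have h1 : Tendsto (fun n => clPoch q (n + n) / (clPoch q n * clPoch q n)) atTop
        (nhds (P / (P * P))) :=
      (hPoch_tendsto.comp hdbl).div (hPoch_tendsto.mul hPoch_tendsto)
        (by positivity)
    have h2 : P / (P * P) = P⁻¹ := by
      rw [div_mul_eq_div_div, div_self hP0.ne', one_div]
    rw [h2] at h1
    apply h1.congr
    intro n
    rw [clGB, if_pos (Nat.le_add_left n n), show n + n - n = n by omega]
  rw [hPeq]
  exact tendsto_nhds_unique (htendsto.congr hsum_eq) hG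

end analytic

section final
variable {q : ℝ} (hq0 : 0 < q) (hq2 : q ≤ 1 / 2)

include hq0 hq2 in
lemma cl_tprod_pos : 0 < ∏' k : ℕ, (1 - q ^ (k + 1)) := by
  rw [(cl_hasProd hq0 hq2).tprod_eq]
  exact Real.exp_pos _

include hq0 hq2 in
lemma cl_Icc_prod (r : ℕ) :
    ∏ k ∈ Finset.Icc 1 r, ((1 - q ^ k)⁻¹) ^ 2 = ((clPoch q r)⁻¹) ^ 2 := by
  induction r with
  | zero => simp [clPoch_zero]
  | succ r ih =>
    rw [Finset.prod_Icc_succ_top (Nat.succ_le_succ (Nat.zero_le r)), ih,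
      clPoch_succ, mul_inv, mul_pow]

end final

/-- The Friedman–Washington / Cohen–Lenstra probability weights
`P(r) = p^{-r²} · η_∞(p) · ∏_{k=1}^{r} (1 - p^{-k})^{-2}`, where
`η_∞(p) = ∏_{k≥1}(1 - p^{-k})`, sum to 1 over all `r ≥ 0`. -/
theorem cohen_lenstra_weights_sum (p : ℕ) (hp : p.Prime) :
    ∑' r : ℕ, ((p : ℝ) ^ (-(r ^ 2 : ℤ)) *
      (∏' k : ℕ, (1 - (p : ℝ) ^ (-((k : ℤ) + 1)))) *
      ∏ k ∈ Finset.Icc 1 r, ((1 - (p : ℝ) ^ (-(k : ℤ)))⁻¹) ^ 2) = 1 := by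
  set q : ℝ := ((p : ℝ))⁻¹ with hqdef
  have hp2 : (2 : ℝ) ≤ (p : ℝ) := by exact_mod_cast hp.two_le
  have hp0 : (0 : ℝ) < (p : ℝ) := by linarith
  have hq0 : 0 < q := by positivity
  have hq2 : q ≤ 1 / 2 := by
    rw [hqdef]
    rw [show (1 : ℝ) / 2 = 2⁻¹ by norm_num]
    exact inv_anti₀ (by norm_num) hp2
  have hzp : ∀ m : ℕ, (p : ℝ) ^ (-(m : ℤ)) = q ^ m := by
    intro m
    rw [zpow_neg, zpow_natCast, hqdef, inv_pow]
  have h1 : ∀ r : ℕ, (p : ℝ) ^ (-(r ^ 2 : ℤ)) = q ^ (r ^ 2) := by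
    intro r
    rw [show (-(r ^ 2 : ℤ)) = -((r ^ 2 : ℕ) : ℤ) by push_cast; ring, hzp]
  have h2 : ∀ k : ℕ, (p : ℝ) ^ (-((k : ℤ) + 1)) = q ^ (k + 1) := by
    intro k
    rw [show (-((k : ℤ) + 1)) = -(((k + 1 : ℕ)) : ℤ) by push_cast; ring, hzp]
  have hprodeq : (∏' k : ℕ, (1 - (p : ℝ) ^ (-((k : ℤ) + 1)))) =
      ∏' k : ℕ, (1 - q ^ (k + 1)) := by
    apply tprod_congr
    intro k
    rw [h2]
  have hterm : ∀ r : ℕ, ((p : ℝ) ^ (-(r ^ 2 : ℤ)) *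
      (∏' k : ℕ, (1 - (p : ℝ) ^ (-((k : ℤ) + 1)))) *
      ∏ k ∈ Finset.Icc 1 r, ((1 - (p : ℝ) ^ (-(k : ℤ)))⁻¹) ^ 2) =
      (∏' k : ℕ, (1 - q ^ (k + 1))) * (((clPoch q r)⁻¹) ^ 2 * q ^ (r ^ 2)) := by
    intro r
    rw [h1, hprodeq]
    have : ∏ k ∈ Finset.Icc 1 r, ((1 - (p : ℝ) ^ (-(k : ℤ)))⁻¹) ^ 2 =
        ∏ k ∈ Finset.Icc 1 r, ((1 - q ^ k)⁻¹) ^ 2 := by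
      apply Finset.prod_congr rfl
      intro k _
      rw [hzp]
    rw [this, cl_Icc_prod hq0 hq2]
    ring
  rw [tsum_congr hterm, tsum_mul_left, cl_key hq0 hq2,
    mul_inv_cancel₀ (cl_tprod_pos hq0 hq2).ne']
end

section
/- Let p be a prime. Malle's modified probability weights Q(r) = p^{-(r²+r)/2} · (η_∞(p)/η_∞(p²)) · ∏_{k=1}^{r} (1 - p^{-k})^{-1}, with η_∞(x) = ∏_{k≥1}(1 - x^{-k}), satisfy ∑_{r=0}^{∞} Q(r) = 1. -/
open Finset Filter Topology Real

namespace MalleAux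
noncomputable def D (q : ℝ) (r : ℕ) : ℝ := ∏ k ∈ Finset.Icc 1 r, (1 - q ^ k)

noncomputable def g (q z : ℝ) (n : ℕ) : ℝ := z ^ n * q ^ ((n ^ 2 + n) / 2) / D q n

variable {q : ℝ}

lemma T_succ (n : ℕ) : ((n + 1) ^ 2 + (n + 1)) / 2 = (n ^ 2 + n) / 2 + (n + 1) := by
  have h1 : (n + 1) ^ 2 = n ^ 2 + 2 * n + 1 := by ring
  have h2 : (n ^ 2 + n) % 2 = 0 := by
    have : n ^ 2 + n = n * (n + 1) := by ring
    rw [this, Nat.even_iff.mp (Nat.even_mul_succ_self n)]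
  omega

lemma T_ge (n : ℕ) : n ≤ (n ^ 2 + n) / 2 := by
  have : n ≤ n ^ 2 := Nat.le_self_pow two_ne_zero n
  omega

lemma hq1 (hq0 : 0 < q) (hq2 : q ≤ 1 / 2) : q < 1 := by linarith

lemma pow_factor_lt_one (hq0 : 0 < q) (hq2 : q ≤ 1 / 2) {k : ℕ} (hk : 1 ≤ k) :
    q ^ k < 1 := by
  calc q ^ k ≤ q ^ 1 := pow_le_pow_of_le_one hq0.le (hq1 hq0 hq2).le hk
  _ < 1 := by simpa using hq1 hq0 hq2

lemma D_pos (hq0 : 0 < q) (hq2 : q ≤ 1 / 2) (r : ℕ) : 0 < D q r := by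
  apply Finset.prod_pos
  intro k hk
  have := pow_factor_lt_one hq0 hq2 (Finset.mem_Icc.mp hk).1
  linarith

lemma D_le_one (hq0 : 0 < q) (hq2 : q ≤ 1 / 2) (r : ℕ) : D q r ≤ 1 := by
  apply Finset.prod_le_one
  · intro k hk
    have := pow_factor_lt_one hq0 hq2 (Finset.mem_Icc.mp hk).1
    linarith
  · intro k _
    have : (0:ℝ) ≤ q ^ k := pow_nonneg hq0.le k
    linarith

lemma D_eq_range (r : ℕ) : D q r = ∏ i ∈ Finset.range r, (1 - q ^ (i + 1)) := by
  induction r with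
  | zero => simp [D]
  | succ n ih =>
      rw [D, Finset.prod_Icc_succ_top (by omega), ← D, ih, Finset.prod_range_succ]

lemma D_succ (n : ℕ) : D q (n + 1) = D q n * (1 - q ^ (n + 1)) := by
  rw [D_eq_range, D_eq_range, Finset.prod_range_succ]

lemma log_one_sub_bound {x : ℝ} (hx0 : 0 ≤ x) (hx : x ≤ 1 / 2) : |Real.log (1 - x)| ≤ 2 * x := by
  have h1 : (0:ℝ) < 1 - x := by linarith
  have h2 : Real.log (1 - x) ≤ 0 := Real.log_nonpos (by linarith) (by linarith)
  have h3 : Real.log (1 - x)⁻¹ ≤ (1 - x)⁻¹ - 1 :=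
    Real.log_le_sub_one_of_pos (by positivity)
  rw [Real.log_inv] at h3
  have h4 : (1 - x)⁻¹ - 1 = x / (1 - x) := by field_simp; ring
  have h5 : x / (1 - x) ≤ 2 * x := by
    rw [div_le_iff₀ h1]; nlinarith
  rw [abs_of_nonpos h2]
  linarith [h3.trans (h4 ▸ h5)]

lemma log_one_add_bound {x : ℝ} (hx0 : 0 ≤ x) : |Real.log (1 + x)| ≤ x := by
  have h2 : 0 ≤ Real.log (1 + x) := Real.log_nonneg (by linarith)
  have h3 : Real.log (1 + x) ≤ (1 + x) - 1 := Real.log_le_sub_one_of_pos (by linarith)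
  rw [abs_of_nonneg h2]; linarith

variable {q : ℝ}

lemma summable_log_one_sub (hq0 : 0 < q) (hq2 : q ≤ 1 / 2) :
    Summable fun n : ℕ => Real.log (1 - q ^ (n + 1)) := by
  apply Summable.of_norm_bounded (g := fun n => (2 * q) * q ^ n)
    ((summable_geometric_of_lt_one hq0.le (by linarith)).mul_left _)
  intro n
  have h1 : q ^ (n + 1) ≤ 1 / 2 := by
    calc q ^ (n + 1) ≤ q ^ 1 := pow_le_pow_of_le_one hq0.le (by linarith) (by omega)
    _ ≤ 1 / 2 := by simpa using hq2
  have := log_one_sub_bound (pow_nonneg hq0.le (n + 1)) h1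
  simpa [Real.norm_eq_abs, pow_succ, mul_comm, mul_assoc, mul_left_comm] using this

lemma summable_log_one_add (hq0 : 0 < q) (hq1 : q < 1) :
    Summable fun n : ℕ => Real.log (1 + q ^ (n + 1)) := by
  apply Summable.of_norm_bounded (g := fun n => q * q ^ n)
    ((summable_geometric_of_lt_one hq0.le hq1).mul_left _)
  intro n
  have := log_one_add_bound (pow_nonneg hq0.le (n + 1))
  simpa [Real.norm_eq_abs, pow_succ, mul_comm] using this

lemma hasProd_one_sub (hq0 : 0 < q) (hq2 : q ≤ 1 / 2) :
    HasProd (fun k : ℕ => 1 - q ^ (k + 1)) (∏' k : ℕ, (1 - q ^ (k + 1))) := by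
  have := (Real.multipliable_of_summable_log (f := fun k : ℕ => 1 - q ^ (k + 1))
    (fun n => by
      have : q ^ (n + 1) ≤ q ^ 1 := pow_le_pow_of_le_one hq0.le (by linarith) (by omega)
      rw [pow_one] at this
      linarith)
    (summable_log_one_sub hq0 hq2)).hasProd
  exact this

lemma tprod_one_sub_pos (hq0 : 0 < q) (hq2 : q ≤ 1 / 2) :
    0 < ∏' k : ℕ, (1 - q ^ (k + 1)) := by
  have := Real.rexp_tsum_eq_tprod (f := fun k : ℕ => 1 - q ^ (k + 1))
    (fun n => by
      have : q ^ (n + 1) ≤ q ^ 1 := pow_le_pow_of_le_one hq0.le (by linarith) (by omega)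
      rw [pow_one] at this
      linarith)
    (summable_log_one_sub hq0 hq2)
  rw [← this]
  exact Real.exp_pos _

lemma hasProd_one_add (hq0 : 0 < q) (hq1 : q < 1) :
    HasProd (fun k : ℕ => 1 + q ^ (k + 1)) (∏' k : ℕ, (1 + q ^ (k + 1))) := by
  have := (Real.multipliable_of_summable_log (f := fun k : ℕ => 1 + q ^ (k + 1))
    (fun n => by positivity)
    (summable_log_one_add hq0 hq1)).hasProd
  exact this

lemma tprod_one_add_pos (hq0 : 0 < q) (hq1 : q < 1) :
    0 < ∏' k : ℕ, (1 + q ^ (k + 1)) := by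
  have := Real.rexp_tsum_eq_tprod (f := fun k : ℕ => 1 + q ^ (k + 1))
    (fun n => by positivity)
    (summable_log_one_add hq0 hq1)
  rw [← this]
  exact Real.exp_pos _


noncomputable def A (q : ℝ) : ℝ := ∏' k : ℕ, (1 - q ^ (k + 1))

lemma A_pos (hq0 : 0 < q) (hq2 : q ≤ 1 / 2) : 0 < A q := tprod_one_sub_pos hq0 hq2

lemma D_anti (hq0 : 0 < q) (hq2 : q ≤ 1 / 2) {r n : ℕ} (h : r ≤ n) : D q n ≤ D q r := by
  induction n, h using Nat.le_induction with
  | base => exact le_refl _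
  | succ n hn ih =>
      rw [D_succ]
      calc D q n * (1 - q ^ (n + 1)) ≤ D q n * 1 := by
            apply mul_le_mul_of_nonneg_left _ (D_pos hq0 hq2 n).le
            have : (0:ℝ) ≤ q ^ (n + 1) := pow_nonneg hq0.le _
            linarith
      _ = D q n := mul_one _
      _ ≤ D q r := ih

lemma A_le_D (hq0 : 0 < q) (hq2 : q ≤ 1 / 2) (r : ℕ) : A q ≤ D q r := by
  have ht := (hasProd_one_sub hq0 hq2).tendsto_prod_nat
  refine le_of_tendsto ht ?_
  filter_upwards [eventually_ge_atTop r] with n hn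
  calc ∏ i ∈ Finset.range n, (1 - q ^ (i + 1)) = D q n := (D_eq_range n).symm
  _ ≤ D q r := D_anti hq0 hq2 hn

lemma g_nonneg (hq0 : 0 < q) (hq2 : q ≤ 1 / 2) {z : ℝ} (hz : 0 ≤ z) (n : ℕ) :
    0 ≤ g q z n := by
  apply div_nonneg (mul_nonneg (pow_nonneg hz n) (pow_nonneg hq0.le _)) (D_pos hq0 hq2 n).le

lemma g_le (hq0 : 0 < q) (hq2 : q ≤ 1 / 2) {z : ℝ} (hz0 : 0 ≤ z) (hz1 : z ≤ 1) (n : ℕ) :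
    g q z n ≤ (A q)⁻¹ * q ^ n := by
  have hA := A_pos hq0 hq2
  have hD := D_pos hq0 hq2 n
  have h1 : z ^ n ≤ 1 := pow_le_one₀ hz0 hz1
  have h2 : q ^ ((n ^ 2 + n) / 2) ≤ q ^ n :=
    pow_le_pow_of_le_one hq0.le (by linarith) (T_ge n)
  have h3 : (D q n)⁻¹ ≤ (A q)⁻¹ := by
    apply inv_anti₀ hA (A_le_D hq0 hq2 n)
  calc g q z n = z ^ n * q ^ ((n ^ 2 + n) / 2) * (D q n)⁻¹ := by rw [g, div_eq_mul_inv]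
  _ ≤ 1 * q ^ n * (A q)⁻¹ := by
      apply mul_le_mul (mul_le_mul h1 h2 (pow_nonneg hq0.le _) zero_le_one) h3
        (inv_nonneg.mpr hD.le)
      positivity
  _ = (A q)⁻¹ * q ^ n := by ring

lemma summable_g (hq0 : 0 < q) (hq2 : q ≤ 1 / 2) {z : ℝ} (hz0 : 0 ≤ z) (hz1 : z ≤ 1) :
    Summable (g q z) :=
  Summable.of_nonneg_of_le (g_nonneg hq0 hq2 hz0)
    (g_le hq0 hq2 hz0 hz1)
    ((summable_geometric_of_lt_one hq0.le (by linarith)).mul_left _)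

noncomputable def F (q z : ℝ) : ℝ := ∑' n, g q z n

lemma g_step (hq0 : 0 < q) (hq2 : q ≤ 1 / 2) (z : ℝ) (n : ℕ) :
    g q z (n + 1) - g q (q * z) (n + 1) = (q * z) * g q (q * z) n := by
  have hD := D_pos hq0 hq2 n
  have hD1 := D_pos hq0 hq2 (n + 1)
  have hfac : (0:ℝ) < 1 - q ^ (n + 1) := by
    have := pow_factor_lt_one hq0 hq2 (k := n + 1) (by omega)
    linarith
  rw [g, g, g, T_succ, D_succ]
  rw [pow_add]
  field_simp
  ring

lemma F_funeq (hq0 : 0 < q) (hq2 : q ≤ 1 / 2) {z : ℝ} (hz0 : 0 ≤ z) (hz1 : z ≤ 1) :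
    F q z = (1 + q * z) * F q (q * z) := by
  have hqz0 : 0 ≤ q * z := mul_nonneg hq0.le hz0
  have hqz1 : q * z ≤ 1 := by nlinarith
  have hS1 := summable_g hq0 hq2 hz0 hz1
  have hS2 := summable_g hq0 hq2 hqz0 hqz1
  have hsub : Summable (fun n => g q z n - g q (q * z) n) := hS1.sub hS2
  have h0 : g q z 0 - g q (q * z) 0 = 0 := by simp [g, D]
  have key : F q z - F q (q * z) = (q * z) * F q (q * z) := by
    calc F q z - F q (q * z) = ∑' n, (g q z n - g q (q * z) n) := (Summable.tsum_sub hS1 hS2).symm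
    _ = (g q z 0 - g q (q * z) 0) + ∑' n, (g q z (n + 1) - g q (q * z) (n + 1)) :=
        hsub.tsum_eq_zero_add
    _ = ∑' n, (q * z) * g q (q * z) n := by
        rw [h0, zero_add]
        exact tsum_congr (g_step hq0 hq2 z)
    _ = (q * z) * F q (q * z) := tsum_mul_left
  linarith [key]

lemma F_iterate (hq0 : 0 < q) (hq2 : q ≤ 1 / 2) (N : ℕ) :
    F q 1 = (∏ k ∈ Finset.range N, (1 + q ^ (k + 1))) * F q (q ^ N) := by
  induction N with
  | zero => simp
  | succ n ih =>
      have hz0 : (0:ℝ) ≤ q ^ n := pow_nonneg hq0.le n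
      have hz1 : q ^ n ≤ 1 := pow_le_one₀ hq0.le (by linarith)
      have := F_funeq hq0 hq2 hz0 hz1
      rw [ih, this, Finset.prod_range_succ]
      have hq : q * q ^ n = q ^ (n + 1) := by ring
      rw [hq]
      ring

lemma F_one_le (hq0 : 0 < q) (hq2 : q ≤ 1 / 2) {z : ℝ} (hz0 : 0 ≤ z) (hz1 : z ≤ 1) :
    1 ≤ F q z := by
  have h := Summable.tsum_eq_zero_add (summable_g hq0 hq2 hz0 hz1)
  have h0 : g q z 0 = 1 := by simp [g, D]
  rw [F, h, h0]
  have : 0 ≤ ∑' n, g q z (n + 1) :=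
    tsum_nonneg fun n => g_nonneg hq0 hq2 hz0 (n + 1)
  linarith

lemma F_le (hq0 : 0 < q) (hq2 : q ≤ 1 / 2) {z : ℝ} (hz0 : 0 ≤ z) (hz1 : z ≤ 1) :
    F q z ≤ 1 + z * ∑' n, g q 1 (n + 1) := by
  have h := Summable.tsum_eq_zero_add (summable_g hq0 hq2 hz0 hz1)
  have h0 : g q z 0 = 1 := by simp [g, D]
  rw [F, h, h0]
  have hle : ∀ n, g q z (n + 1) ≤ z * g q 1 (n + 1) := by
    intro n
    rw [g, g, one_pow]
    have hD := D_pos hq0 hq2 (n + 1)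
    have hzn : z ^ (n + 1) ≤ z := by
      calc z ^ (n + 1) ≤ z ^ 1 := pow_le_pow_of_le_one hz0 hz1 (by omega)
      _ = z := pow_one z
    have hqT : (0:ℝ) ≤ q ^ (((n+1) ^ 2 + (n+1)) / 2) := pow_nonneg hq0.le _
    have h5 : z ^ (n + 1) * q ^ (((n+1) ^ 2 + (n+1)) / 2)
        ≤ z * (1 * q ^ (((n+1) ^ 2 + (n+1)) / 2)) := by nlinarith
    calc z ^ (n + 1) * q ^ (((n+1) ^ 2 + (n+1)) / 2) / D q (n + 1)
        ≤ z * (1 * q ^ (((n+1) ^ 2 + (n+1)) / 2)) / D q (n + 1) :=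
          by gcongr
    _ = z * (1 * q ^ (((n+1) ^ 2 + (n+1)) / 2) / D q (n + 1)) := by ring
  have hs1 : Summable fun n => g q z (n + 1) :=
    (summable_g hq0 hq2 hz0 hz1).comp_injective (add_left_injective 1)
  have hs2 : Summable fun n => z * g q 1 (n + 1) :=
    ((summable_g hq0 hq2 zero_le_one le_rfl).comp_injective (add_left_injective 1)).mul_left z
  have := Summable.tsum_le_tsum hle hs1 hs2
  rw [tsum_mul_left] at this
  linarith

noncomputable def P (q : ℝ) : ℝ := ∏' k : ℕ, (1 + q ^ (k + 1))

lemma F_one_eq_P (hq0 : 0 < q) (hq2 : q ≤ 1 / 2) : F q 1 = P q := by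
  have hq1 : q < 1 := by linarith
  have h1 : Tendsto (fun N => ∏ k ∈ Finset.range N, (1 + q ^ (k + 1))) atTop (𝓝 (P q)) :=
    (hasProd_one_add hq0 hq1).tendsto_prod_nat
  set C := ∑' n, g q 1 (n + 1) with hC
  have h2 : Tendsto (fun N : ℕ => F q (q ^ N)) atTop (𝓝 1) := by
    have hl : Tendsto (fun _ : ℕ => (1:ℝ)) atTop (𝓝 1) := tendsto_const_nhds
    have hu : Tendsto (fun N : ℕ => 1 + q ^ N * C) atTop (𝓝 1) := by
      have := (tendsto_pow_atTop_nhds_zero_of_lt_one hq0.le hq1).mul_const C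
      simpa using tendsto_const_nhds.add this
    apply tendsto_of_tendsto_of_tendsto_of_le_of_le hl hu
    · intro N
      exact F_one_le hq0 hq2 (pow_nonneg hq0.le N) (pow_le_one₀ hq0.le hq1.le)
    · intro N
      have := F_le hq0 hq2 (pow_nonneg hq0.le N) (pow_le_one₀ hq0.le hq1.le)
      simpa [hC] using this
  have h3 : Tendsto (fun N : ℕ =>
      (∏ k ∈ Finset.range N, (1 + q ^ (k + 1))) * F q (q ^ N)) atTop (𝓝 (P q * 1)) :=
    h1.mul h2
  have h4 : (fun N : ℕ => (∏ k ∈ Finset.range N, (1 + q ^ (k + 1))) * F q (q ^ N))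
      = fun _ => F q 1 := funext fun N => (F_iterate hq0 hq2 N).symm
  rw [h4] at h3
  have := tendsto_nhds_unique tendsto_const_nhds h3
  rw [this, mul_one]

lemma P_pos (hq0 : 0 < q) (hq2 : q ≤ 1 / 2) : 0 < P q :=
  tprod_one_add_pos hq0 (by linarith)

lemma B_eq (hq0 : 0 < q) (hq2 : q ≤ 1 / 2) :
    (∏' k : ℕ, (1 - (q ^ 2) ^ (k + 1))) = A q * P q := by
  have hq1 : q < 1 := by linarith
  have h1 : ∀ k : ℕ, 1 - (q ^ 2) ^ (k + 1) = (1 - q ^ (k + 1)) * (1 + q ^ (k + 1)) := by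
    intro k
    have : (q ^ 2) ^ (k + 1) = (q ^ (k + 1)) ^ 2 := by
      rw [← pow_mul, ← pow_mul, mul_comm]
    rw [this]; ring
  calc (∏' k : ℕ, (1 - (q ^ 2) ^ (k + 1)))
      = ∏' k : ℕ, ((1 - q ^ (k + 1)) * (1 + q ^ (k + 1))) := tprod_congr h1
  _ = A q * P q := Multipliable.tprod_mul (hasProd_one_sub hq0 hq2).multipliable
        (hasProd_one_add hq0 hq1).multipliable

lemma zpow_neg_succ (x : ℝ) (k : ℕ) : x ^ (-((k : ℤ) + 1)) = x⁻¹ ^ (k + 1) := by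
  have : -((k : ℤ) + 1) = -(((k + 1 : ℕ) : ℤ)) := by push_cast; ring
  rw [this, zpow_neg, zpow_natCast, inv_pow]

lemma zpow_neg_nat (x : ℝ) (m : ℕ) : x ^ (-(m : ℤ)) = x⁻¹ ^ m := by
  rw [zpow_neg, zpow_natCast, inv_pow]

end MalleAux

open MalleAux

/-- Malle's modified probability weights
`Q(r) = p^{-(r²+r)/2} · (η_∞(p)/η_∞(p²)) · ∏_{k=1}^{r} (1 - p^{-k})^{-1}`, where
`η_∞(x) = ∏_{k≥1}(1 - x^{-k})`, sum to 1 over all `r ≥ 0`.  Note `(r²+r)/2` is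
exact since `r² + r` is even. -/
theorem malle_weights_sum (p : ℕ) (hp : p.Prime) :
    ∑' r : ℕ, ((p : ℝ) ^ (-(((r ^ 2 + r) / 2 : ℕ) : ℤ)) *
      ((∏' k : ℕ, (1 - (p : ℝ) ^ (-((k : ℤ) + 1)))) /
       (∏' k : ℕ, (1 - ((p : ℝ) ^ 2) ^ (-((k : ℤ) + 1))))) *
      ∏ k ∈ Finset.Icc 1 r, (1 - (p : ℝ) ^ (-(k : ℤ)))⁻¹) = 1 := by
  have hp2 : (2 : ℝ) ≤ (p : ℝ) := by exact_mod_cast hp.two_le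
  have hp0 : (0 : ℝ) < (p : ℝ) := by linarith
  set q : ℝ := ((p : ℝ))⁻¹ with hq
  have hq0 : 0 < q := inv_pos.mpr hp0
  have hq2 : q ≤ 1 / 2 := by
    rw [hq]
    rw [inv_le_comm₀ hp0 (by norm_num)]
    linarith
  have hA := A_pos hq0 hq2
  have hP := P_pos hq0 hq2
  -- rewrite the two infinite products
  have e1 : (∏' k : ℕ, (1 - (p : ℝ) ^ (-((k : ℤ) + 1)))) = A q := by
    refine tprod_congr fun k => ?_
    rw [zpow_neg_succ]
  have e2 : (∏' k : ℕ, (1 - ((p : ℝ) ^ 2) ^ (-((k : ℤ) + 1)))) = A q * P q := by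
    rw [← B_eq hq0 hq2]
    refine tprod_congr fun k => ?_
    rw [zpow_neg_succ, inv_pow, ← inv_pow, ← inv_pow]
  have e3 : ∀ r : ℕ, (∏ k ∈ Finset.Icc 1 r, (1 - (p : ℝ) ^ (-(k : ℤ)))⁻¹) = (D q r)⁻¹ := by
    intro r
    rw [D, ← Finset.prod_inv_distrib]
    refine Finset.prod_congr rfl fun k _ => ?_
    rw [zpow_neg_nat]
  have e4 : ∀ r : ℕ, (p : ℝ) ^ (-(((r ^ 2 + r) / 2 : ℕ) : ℤ)) = q ^ ((r ^ 2 + r) / 2) :=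
    fun r => zpow_neg_nat _ _
  calc ∑' r : ℕ, ((p : ℝ) ^ (-(((r ^ 2 + r) / 2 : ℕ) : ℤ)) *
      ((∏' k : ℕ, (1 - (p : ℝ) ^ (-((k : ℤ) + 1)))) /
       (∏' k : ℕ, (1 - ((p : ℝ) ^ 2) ^ (-((k : ℤ) + 1))))) *
      ∏ k ∈ Finset.Icc 1 r, (1 - (p : ℝ) ^ (-(k : ℤ)))⁻¹)
      = ∑' r : ℕ, (A q / (A q * P q)) * g q 1 r := by
        refine tsum_congr fun r => ?_
        rw [e1, e2, e3, e4, g, one_pow]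
        field_simp
  _ = (A q / (A q * P q)) * F q 1 := tsum_mul_left
  _ = (A q / (A q * P q)) * P q := by rw [F_one_eq_P hq0 hq2]
  _ = 1 := by field_simp
end
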